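/- Let S be a set, A a nonempty finite set, d, l positive integers, H ≥ 1, β > 0, λ̃ > 0, L₁ > 0, ε > 0. Let φ : S × A → ℝ^d satisfy ‖φ(s,a)‖₂ ≤ 1 for all (s,a), and let r : S × A → [0,1] be a fixed function. Consider the function class 𝒱 of all functions V : S → ℝ of the form V(s) = max_{a ∈ A} min_{1 ≤ i ≤ l} min( H, r(s,a) + w_iᵀ φ(s,a) + β·√(φ(s,a)ᵀ Λ_i⁻¹ φ(s,a)) ), where w₁,…,w_l ∈ ℝ^d satisfy ‖w_i‖₂ ≤ L₁ and Λ₁,…,Λ_l are d×d positive definite matrices with Λ_i ⪰ λ̃·I_d. Then the ε-covering number N_ε of 𝒱 with respect to the sup distance dist(V₁, V₂) = sup_{s ∈ S} |V₁(s) − V₂(s)| satisfies log N_ε ≤ d·l·log(1 + 4L₁/ε) + d²·l·log(1 + 8√d·β² / (λ̃·ε²)). -/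

import Mathlib

open Matrix MeasureTheory Metric Finset Module ENNReal

/-- The Euclidean norm of a vector in `ℝ^d`. -/
noncomputable def euclNorm {d : ℕ} (x : Fin d → ℝ) : ℝ := Real.sqrt (∑ i, x i ^ 2)

noncomputable def frobSq {d : ℕ} (M : Matrix (Fin d) (Fin d) ℝ) : ℝ :=
  ∑ p : Fin d × Fin d, (M p.1 p.2) ^ 2

section Cover
variable {ι : Type*} [Fintype ι] [Nonempty ι]

omit [Nonempty ι] in
lemma packing_card_le (R δ : ℝ) (hR : 0 ≤ R) (hδ : 0 < δ)
    (T : Finset (EuclideanSpace ℝ ι)) (hT : ∀ x ∈ T, ‖x‖ ≤ R)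
    (hsep : ∀ x ∈ T, ∀ y ∈ T, x ≠ y → δ < dist x y) :
    (T.card : ℝ) ≤ (1 + 2 * R / δ) ^ (Fintype.card ι) := by
  set n := Fintype.card ι with hn'
  have hn : finrank ℝ (EuclideanSpace ℝ ι) = n := finrank_euclideanSpace
  set μ : Measure (EuclideanSpace ℝ ι) := volume with hμ
  have hc0 : 0 < μ (closedBall (0:EuclideanSpace ℝ ι) 1) :=
    lt_of_lt_of_le (measure_ball_pos μ (0:EuclideanSpace ℝ ι) one_pos)
      (measure_mono ball_subset_closedBall)
  have hcT : μ (closedBall (0:EuclideanSpace ℝ ι) 1) < ⊤ := measure_closedBall_lt_top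
  have hdisj : (T : Set (EuclideanSpace ℝ ι)).PairwiseDisjoint (fun t => closedBall t (δ/2)) := by
    intro x hx y hy hxy
    apply closedBall_disjoint_closedBall
    have := hsep x hx y hy hxy
    linarith
  have hsum : ∑ t ∈ T, μ (closedBall t (δ/2)) = μ (⋃ t ∈ T, closedBall t (δ/2)) :=
    (measure_biUnion_finset hdisj (fun t _ => measurableSet_closedBall)).symm
  have hsub : (⋃ t ∈ T, closedBall t (δ/2)) ⊆ closedBall (0:EuclideanSpace ℝ ι) (R + δ/2) := by
    intro z hz
    simp only [Set.mem_iUnion] at hz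
    obtain ⟨t, ht, hzt⟩ := hz
    rw [mem_closedBall] at hzt ⊢
    calc dist z 0 ≤ dist z t + dist t 0 := dist_triangle _ _ _
    _ ≤ δ/2 + R := by
        have := hT t ht
        rw [← dist_zero_right] at this
        linarith
    _ = R + δ/2 := by ring
  have hball : ∀ t : EuclideanSpace ℝ ι, μ (closedBall t (δ/2))
      = ENNReal.ofReal ((δ/2)^n) * μ (closedBall (0:EuclideanSpace ℝ ι) 1) := by
    intro t
    rw [μ.addHaar_closedBall' t (by linarith : (0:ℝ) ≤ δ/2), hn]
  have hbig : μ (closedBall (0:EuclideanSpace ℝ ι) (R + δ/2))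
      = ENNReal.ofReal ((R + δ/2)^n) * μ (closedBall (0:EuclideanSpace ℝ ι) 1) := by
    rw [μ.addHaar_closedBall' (0:EuclideanSpace ℝ ι) (by linarith : (0:ℝ) ≤ R + δ/2), hn]
  have key : ((T.card : ℝ≥0∞) * ENNReal.ofReal ((δ/2)^n)) * μ (closedBall (0:EuclideanSpace ℝ ι) 1)
      ≤ ENNReal.ofReal ((R + δ/2)^n) * μ (closedBall (0:EuclideanSpace ℝ ι) 1) := by
    calc ((T.card : ℝ≥0∞) * ENNReal.ofReal ((δ/2)^n)) * μ (closedBall (0:EuclideanSpace ℝ ι) 1)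
        = ∑ t ∈ T, μ (closedBall t (δ/2)) := by
          rw [Finset.sum_congr rfl (fun t _ => hball t), Finset.sum_const, nsmul_eq_mul, mul_assoc]
    _ = μ (⋃ t ∈ T, closedBall t (δ/2)) := hsum
    _ ≤ μ (closedBall (0:EuclideanSpace ℝ ι) (R + δ/2)) := measure_mono hsub
    _ = _ := hbig
  have key2 : (T.card : ℝ≥0∞) * ENNReal.ofReal ((δ/2)^n) ≤ ENNReal.ofReal ((R + δ/2)^n) :=
    (ENNReal.mul_le_mul_iff_left hc0.ne' hcT.ne).1 key
  have hδ2 : (0:ℝ) < (δ/2)^n := pow_pos (by linarith) n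
  have key3 : (T.card : ℝ) * (δ/2)^n ≤ (R + δ/2)^n := by
    have := key2
    rw [← ENNReal.ofReal_natCast, ← ENNReal.ofReal_mul (by positivity)] at this
    exact (ENNReal.ofReal_le_ofReal_iff (by positivity)).1 this
  have key4 : (T.card : ℝ) ≤ ((R + δ/2)/(δ/2))^n := by
    rw [div_pow, le_div_iff₀ hδ2]
    exact key3
  have : (R + δ/2)/(δ/2) = 1 + 2*R/δ := by field_simp; ring
  rwa [this] at key4

lemma euclidean_cover (R δ : ℝ) (hR : 0 ≤ R) (hδ : 0 < δ) :
    ∃ T : Finset (EuclideanSpace ℝ ι),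
      (∀ x : EuclideanSpace ℝ ι, ‖x‖ ≤ R → ∃ y ∈ T, dist x y ≤ δ) ∧
      (T.card : ℝ) ≤ (1 + 2 * R / δ) ^ (Fintype.card ι) := by
  classical
  set P : Finset (EuclideanSpace ℝ ι) → Prop :=
    fun T => (∀ x ∈ T, ‖x‖ ≤ R) ∧ (∀ x ∈ T, ∀ y ∈ T, x ≠ y → δ < dist x y) with hP
  have hbdd : ∀ T, P T → T.card ≤ Nat.ceil ((1 + 2*R/δ)^(Fintype.card ι)) := by
    intro T hT
    have h1 : (T.card : ℝ) ≤ (1 + 2*R/δ)^(Fintype.card ι) := packing_card_le R δ hR hδ T hT.1 hT.2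
    exact_mod_cast h1.trans (Nat.le_ceil _)
  set s : Set ℕ := {k | ∃ T, P T ∧ T.card = k} with hs
  have hne : s.Nonempty := ⟨0, ∅, ⟨by simp, by simp⟩, rfl⟩
  have hbd : BddAbove s := ⟨Nat.ceil ((1 + 2*R/δ)^(Fintype.card ι)), by
    rintro k ⟨T, hT, rfl⟩; exact hbdd T hT⟩
  obtain ⟨T, hT, hcard⟩ := Nat.sSup_mem hne hbd
  refine ⟨T, ?_, (packing_card_le R δ hR hδ T hT.1 hT.2)⟩
  intro x hx
  by_contra hcon
  push_neg at hcon
  have hxT : x ∉ T := fun hxT => by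
    have := hcon x hxT; simp at this; linarith
  have hP' : P (insert x T) := by
    constructor
    · intro y hy
      rcases Finset.mem_insert.1 hy with rfl | hy
      · exact hx
      · exact hT.1 y hy
    · intro y hy z hz hyz
      rcases Finset.mem_insert.1 hy with hy1 | hy1 <;> rcases Finset.mem_insert.1 hz with hz1 | hz1
      · exact absurd (hy1.trans hz1.symm) hyz
      · subst hy1; exact hcon z hz1
      · subst hz1; rw [dist_comm]; exact hcon y hy1
      · exact hT.2 y hy1 z hz1 hyz
  have : T.card + 1 ∈ s := ⟨insert x T, hP', by rw [Finset.card_insert_of_notMem hxT]⟩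
  have := le_csSup hbd this
  omega

end Cover

lemma sqrt_subadd (u v : ℝ) (hu : 0 ≤ u) (hv : 0 ≤ v) :
    Real.sqrt (u + v) ≤ Real.sqrt u + Real.sqrt v := by
  have h1 : u + v ≤ (Real.sqrt u + Real.sqrt v) ^ 2 := by
    have := Real.sq_sqrt hu; have := Real.sq_sqrt hv
    have := Real.sqrt_nonneg u; have := Real.sqrt_nonneg v
    nlinarith
  calc Real.sqrt (u + v) ≤ Real.sqrt ((Real.sqrt u + Real.sqrt v)^2) := Real.sqrt_le_sqrt h1
  _ = Real.sqrt u + Real.sqrt v := Real.sqrt_sq (by positivity)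

lemma sqrt_lip (x y : ℝ) : |Real.sqrt x - Real.sqrt y| ≤ Real.sqrt |x - y| := by
  have key : ∀ a b : ℝ, Real.sqrt a - Real.sqrt b ≤ Real.sqrt |a - b| := by
    intro a b
    have h1 : Real.sqrt a ≤ Real.sqrt b + Real.sqrt |a - b| := by
      have hm : Real.sqrt (max b 0) = Real.sqrt b := by
        rcases le_or_gt 0 b with hb | hb
        · rw [max_eq_left hb]
        · rw [max_eq_right hb.le, Real.sqrt_zero, Real.sqrt_eq_zero_of_nonpos hb.le]
      have ha : a ≤ max b 0 + |a - b| := by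
        rcases le_or_gt 0 b with hb | hb
        · rw [max_eq_left hb]; have := le_abs_self (a - b); linarith
        · rw [max_eq_right hb.le]; have := le_abs_self (a - b); linarith
      calc Real.sqrt a ≤ Real.sqrt (max b 0 + |a - b|) := Real.sqrt_le_sqrt ha
      _ ≤ Real.sqrt (max b 0) + Real.sqrt |a - b| :=
          sqrt_subadd _ _ (le_max_right _ _) (abs_nonneg _)
      _ = Real.sqrt b + Real.sqrt |a - b| := by rw [hm]
    linarith
  rw [abs_sub_le_iff]
  refine ⟨key x y, ?_⟩
  rw [abs_sub_comm]
  exact key y x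

lemma abs_sum_mul_le {κ : Type*} [Fintype κ] (f g : κ → ℝ) :
    |∑ p, f p * g p| ≤ Real.sqrt (∑ p, f p ^ 2) * Real.sqrt (∑ p, g p ^ 2) := by
  rw [← Real.sqrt_sq_eq_abs]
  calc Real.sqrt ((∑ p, f p * g p) ^ 2)
      ≤ Real.sqrt ((∑ p, f p ^ 2) * (∑ p, g p ^ 2)) :=
        Real.sqrt_le_sqrt (Finset.sum_mul_sq_le_sq_mul_sq Finset.univ f g)
  _ = _ := Real.sqrt_mul (by positivity) _

lemma dot_CS {d : ℕ} (x y : Fin d → ℝ) : |x ⬝ᵥ y| ≤ euclNorm x * euclNorm y :=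
  abs_sum_mul_le x y

lemma quad_bound {d : ℕ} (M : Matrix (Fin d) (Fin d) ℝ) (x : Fin d → ℝ) :
    |x ⬝ᵥ (M *ᵥ x)| ≤ Real.sqrt (frobSq M) * (∑ i, x i ^ 2) := by
  have hexp : x ⬝ᵥ (M *ᵥ x) = ∑ p : Fin d × Fin d, (M p.1 p.2) * (x p.1 * x p.2) := by
    rw [Fintype.sum_prod_type]
    simp only [dotProduct, Matrix.mulVec, dotProduct, Finset.mul_sum]
    exact Finset.sum_congr rfl fun i _ => Finset.sum_congr rfl fun j _ => by ring
  rw [hexp]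
  have := abs_sum_mul_le (fun p : Fin d × Fin d => M p.1 p.2) (fun p => x p.1 * x p.2)
  have hsq : ∑ p : Fin d × Fin d, (x p.1 * x p.2)^2 = (∑ i, x i ^2)^2 := by
    rw [Fintype.sum_prod_type, sq (∑ i, x i ^2), Finset.sum_mul_sum]
    exact Finset.sum_congr rfl fun i _ => Finset.sum_congr rfl fun j _ => by ring
  rw [hsq, Real.sqrt_sq (by positivity)] at this
  exact this

lemma inv_frobSq_le {d : ℕ} {lam : ℝ} (hlam : 0 < lam) (Λ : Matrix (Fin d) (Fin d) ℝ)
    (hpd : Λ.PosDef) (hpsd : (Λ - lam • (1 : Matrix (Fin d) (Fin d) ℝ)).PosSemidef) :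
    frobSq Λ⁻¹ ≤ d / lam ^ 2 := by
  have hdet : IsUnit Λ.det := (Matrix.isUnit_iff_isUnit_det Λ).1 hpd.isUnit
  have hcol : ∀ j : Fin d, ∑ i, ((Λ⁻¹) i j) ^ 2 ≤ 1 / lam ^ 2 := by
    intro j
    set y : Fin d → ℝ := Λ⁻¹ *ᵥ Pi.single j 1 with hy
    have hyi : ∀ i, y i = (Λ⁻¹) i j := by
      intro i
      simp [hy, Matrix.mulVec_single]
    have hΛy : Λ *ᵥ y = Pi.single j 1 := by
      rw [hy, Matrix.mulVec_mulVec, Matrix.mul_nonsing_inv Λ hdet, Matrix.one_mulVec]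
    have hq := hpsd.dotProduct_mulVec_nonneg y
    rw [star_trivial, Matrix.sub_mulVec, Matrix.smul_mulVec, Matrix.one_mulVec,
      dotProduct_sub, dotProduct_smul, hΛy] at hq
    have h1 : lam * (y ⬝ᵥ y) ≤ y ⬝ᵥ Pi.single j 1 := by
      have : lam • (y ⬝ᵥ y) = lam * (y ⬝ᵥ y) := rfl
      rw [this] at hq
      linarith
    rw [dotProduct_single, mul_one] at h1
    have hyy : y ⬝ᵥ y = ∑ i, y i ^ 2 := by
      simp [dotProduct, sq]
    have hb0 : 0 ≤ ∑ i, y i ^ 2 := Finset.sum_nonneg fun i _ => sq_nonneg _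
    have ha : y j ≤ Real.sqrt (∑ i, y i ^ 2) := by
      have hsingle : (∑ i, (Pi.single j 1 : Fin d → ℝ) i ^ 2) = 1 := by
        simp [Pi.single_apply, sq]
      have h2 : y j = ∑ i, (Pi.single j 1 : Fin d → ℝ) i * y i := by
        simp [Pi.single_apply]
      rw [h2]
      calc ∑ i, (Pi.single j 1 : Fin d → ℝ) i * y i
          ≤ |∑ i, (Pi.single j 1 : Fin d → ℝ) i * y i| := le_abs_self _
      _ ≤ Real.sqrt (∑ i, (Pi.single j 1 : Fin d → ℝ) i ^ 2) * Real.sqrt (∑ i, y i ^ 2) :=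
          abs_sum_mul_le _ _
      _ = Real.sqrt (∑ i, y i ^ 2) := by rw [hsingle, Real.sqrt_one, one_mul]
    rw [hyy] at h1
    set b := ∑ i, y i ^ 2 with hbdef
    have ha0 : 0 ≤ y j := le_trans (mul_nonneg hlam.le hb0) h1
    have hsq : (y j) ^ 2 ≤ b := by
      have := Real.sqrt_nonneg b
      nlinarith [Real.sq_sqrt hb0]
    have h2 : lam * (y j) ^ 2 ≤ y j := le_trans (mul_le_mul_of_nonneg_left hsq hlam.le) h1
    have hyj : y j ≤ 1 / lam := by
      by_contra hcon
      push_neg at hcon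
      have hpos : 0 < y j := lt_trans (by positivity) hcon
      have h3 := mul_lt_mul_of_pos_right hcon (mul_pos hlam hpos)
      rw [one_div, inv_mul_cancel_left₀ hlam.ne'] at h3
      nlinarith
    have hfinal : b ≤ 1 / lam ^ 2 := by
      have h4 : lam * (lam * b) ≤ lam * (1 / lam) := mul_le_mul_of_nonneg_left (h1.trans hyj) hlam.le
      rw [mul_one_div, div_self hlam.ne'] at h4
      rw [le_div_iff₀ (by positivity)]
      nlinarith
    calc ∑ i, ((Λ⁻¹) i j) ^ 2 = b := by
          rw [hbdef]; exact Finset.sum_congr rfl fun i _ => by rw [hyi i]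
    _ ≤ 1 / lam ^ 2 := hfinal
  calc frobSq Λ⁻¹ = ∑ j, ∑ i, ((Λ⁻¹) i j) ^ 2 := by
        rw [frobSq, Fintype.sum_prod_type]
        exact Finset.sum_comm
  _ ≤ ∑ _j : Fin d, 1 / lam ^ 2 := Finset.sum_le_sum fun j _ => hcol j
  _ = d / lam ^ 2 := by simp [Finset.sum_const]; ring

lemma sup'_lip {κ : Type*} {s : Finset κ} (hs : s.Nonempty) (f g : κ → ℝ) {e : ℝ}
    (h : ∀ a ∈ s, |f a - g a| ≤ e) : |s.sup' hs f - s.sup' hs g| ≤ e := by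
  have key : ∀ f g : κ → ℝ, (∀ a ∈ s, |f a - g a| ≤ e) → s.sup' hs f - s.sup' hs g ≤ e := by
    intro f g h
    rw [sub_le_iff_le_add]
    refine Finset.sup'_le _ _ fun a ha => ?_
    have h1 := (abs_sub_le_iff.1 (h a ha)).1
    have h2 : g a ≤ s.sup' hs g := Finset.le_sup' g ha
    linarith
  rw [abs_sub_le_iff]
  exact ⟨key f g h, key g f fun a ha => by rw [abs_sub_comm]; exact h a ha⟩

lemma inf'_lip {κ : Type*} {s : Finset κ} (hs : s.Nonempty) (f g : κ → ℝ) {e : ℝ}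
    (h : ∀ a ∈ s, |f a - g a| ≤ e) : |s.inf' hs f - s.inf' hs g| ≤ e := by
  have key : ∀ f g : κ → ℝ, (∀ a ∈ s, |f a - g a| ≤ e) → s.inf' hs f - s.inf' hs g ≤ e := by
    intro f g h
    rw [sub_le_iff_le_add]
    obtain ⟨a, ha, hav⟩ := Finset.exists_mem_eq_inf' hs g
    rw [hav]
    have h1 := (abs_sub_le_iff.1 (h a ha)).1
    have h2 : s.inf' hs f ≤ f a := Finset.inf'_le f ha
    linarith
  rw [abs_sub_le_iff]
  exact ⟨key f g h, key g f fun a ha => by rw [abs_sub_comm]; exact h a ha⟩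

lemma min_lip (a x y : ℝ) : |min a x - min a y| ≤ |x - y| := by
  have h1 := le_abs_self (x - y)
  have h2 := neg_abs_le (x - y)
  rcases le_total a x with hx | hx <;> rcases le_total a y with hy | hy
  · rw [min_eq_left hx, min_eq_left hy, sub_self, abs_zero]; exact abs_nonneg _
  · rw [min_eq_left hx, min_eq_right hy, abs_sub_le_iff]; constructor <;> linarith
  · rw [min_eq_right hx, min_eq_left hy, abs_sub_le_iff]; constructor <;> linarith
  · rw [min_eq_right hx, min_eq_right hy, abs_sub_le_iff]; constructor <;> linarith

lemma euclNorm_eq_norm {d : ℕ} (x : Fin d → ℝ) :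
    euclNorm x = ‖WithLp.toLp 2 x‖ := by
  rw [EuclideanSpace.norm_eq]
  unfold euclNorm
  congr 1
  exact Finset.sum_congr rfl fun i _ => by rw [Real.norm_eq_abs, sq_abs]

lemma dist_eq_euclNorm {d : ℕ} (x y : EuclideanSpace ℝ (Fin d)) :
    dist x y = euclNorm (fun j => x j - y j) := by
  rw [EuclideanSpace.dist_eq]
  unfold euclNorm
  congr 1
  exact Finset.sum_congr rfl fun i _ => by rw [Real.dist_eq, sq_abs]

theorem stmt_11 {S A : Type*} [Fintype A] [Nonempty A]
    (d l : ℕ) (hd : 0 < d) (hl : 0 < l)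
    (H β lam L₁ ε : ℝ) (hH : 1 ≤ H) (hβ : 0 < β) (hlam : 0 < lam) (hL₁ : 0 < L₁)
    (hε : 0 < ε)
    (φ : S → A → Fin d → ℝ) (hφ : ∀ s a, euclNorm (φ s a) ≤ 1)
    (r : S → A → ℝ) (hr : ∀ s a, r s a ∈ Set.Icc (0 : ℝ) 1)
    (𝒱 : Set (S → ℝ))
    (h𝒱 : 𝒱 = {V | ∃ (w : Fin l → Fin d → ℝ) (Λ : Fin l → Matrix (Fin d) (Fin d) ℝ),
      (∀ i, euclNorm (w i) ≤ L₁) ∧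
      (∀ i, (Λ i).PosDef ∧ (Λ i - lam • (1 : Matrix (Fin d) (Fin d) ℝ)).PosSemidef) ∧
      ∀ s, V s = Finset.univ.sup' (Finset.univ_nonempty (α := A)) (fun a : A =>
        Finset.univ.inf' ⟨⟨0, hl⟩, Finset.mem_univ _⟩ (fun i : Fin l =>
          min H (r s a + w i ⬝ᵥ φ s a
            + β * Real.sqrt (φ s a ⬝ᵥ ((Λ i)⁻¹ *ᵥ φ s a)))))}) :
    ∃ C : Finset (S → ℝ),
      (∀ V ∈ 𝒱, ∃ g ∈ C, ∀ s, |V s - g s| ≤ ε) ∧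
      Real.log C.card ≤ d * l * Real.log (1 + 4 * L₁ / ε)
        + d ^ 2 * l * Real.log (1 + 8 * Real.sqrt d * β ^ 2 / (lam * ε ^ 2)) := by
  classical
  have hdne : Nonempty (Fin d) := ⟨⟨0, hd⟩⟩
  have hd2ne : Nonempty (Fin d × Fin d) := ⟨(⟨0, hd⟩, ⟨0, hd⟩)⟩
  have hRA : (0:ℝ) ≤ β^2 * Real.sqrt d / lam := by positivity
  obtain ⟨Wnet, hWcov, hWcard⟩ := euclidean_cover (ι := Fin d) L₁ (ε/2) hL₁.le (by linarith)
  obtain ⟨Anet, hAcov, hAcard⟩ := euclidean_cover (ι := Fin d × Fin d)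
    (β^2 * Real.sqrt d / lam) (ε^2/4) hRA (by positivity)
  set F : ((Fin l → EuclideanSpace ℝ (Fin d)) × (Fin l → EuclideanSpace ℝ (Fin d × Fin d)))
      → (S → ℝ) :=
    fun p s => Finset.univ.sup' (Finset.univ_nonempty (α := A)) (fun a : A =>
      Finset.univ.inf' ⟨⟨0, hl⟩, Finset.mem_univ _⟩ (fun i : Fin l =>
        min H (r s a + (fun j => p.1 i j) ⬝ᵥ φ s a
          + Real.sqrt (φ s a ⬝ᵥ ((Matrix.of fun j k => p.2 i (j, k)) *ᵥ φ s a))))) with hF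
  refine ⟨Finset.image F ((Fintype.piFinset fun _ : Fin l => Wnet) ×ˢ
    (Fintype.piFinset fun _ : Fin l => Anet)), ?_, ?_⟩
  · -- covering property
    intro V hV
    rw [h𝒱] at hV
    obtain ⟨w, Λ, hw, hΛ, hVs⟩ := hV
    have hwball : ∀ i, ‖WithLp.toLp 2 (w i)‖ ≤ L₁ := by
      intro i; rw [← euclNorm_eq_norm]; exact hw i
    choose wy hwy hwyd using fun i => hWcov _ (hwball i)
    -- the scaled inverse matrices as Euclidean vectors
    set Avec : Fin l → EuclideanSpace ℝ (Fin d × Fin d) :=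
      fun i => (WithLp.toLp 2
        fun p : Fin d × Fin d => β^2 * ((Λ i)⁻¹ p.1 p.2)) with hAvec
    have hAball : ∀ i, ‖Avec i‖ ≤ β^2 * Real.sqrt d / lam := by
      intro i
      rw [EuclideanSpace.norm_eq]
      have h1 : ∀ p : Fin d × Fin d, ‖Avec i p‖^2 = β^4 * ((Λ i)⁻¹ p.1 p.2)^2 := by
        intro p
        rw [Real.norm_eq_abs, sq_abs, hAvec]
        ring
      rw [Finset.sum_congr rfl fun p _ => h1 p, ← Finset.mul_sum]
      have h2 : (∑ p : Fin d × Fin d, ((Λ i)⁻¹ p.1 p.2)^2) ≤ d / lam^2 :=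
        inv_frobSq_le hlam (Λ i) (hΛ i).1 (hΛ i).2
      calc Real.sqrt (β^4 * ∑ p : Fin d × Fin d, ((Λ i)⁻¹ p.1 p.2)^2)
          ≤ Real.sqrt (β^4 * (d / lam^2)) := by
            apply Real.sqrt_le_sqrt
            exact mul_le_mul_of_nonneg_left h2 (by positivity)
      _ = β^2 * Real.sqrt d / lam := by
          rw [show β^4 * ((d:ℝ) / lam^2) = (β^2 * Real.sqrt d / lam)^2 by
            rw [div_pow, mul_pow, Real.sq_sqrt (by positivity : (0:ℝ) ≤ (d:ℝ))]
            ring]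
          exact Real.sqrt_sq (by positivity)
    choose Ay hAy hAyd using fun i => hAcov _ (hAball i)
    refine ⟨F (wy, Ay), Finset.mem_image_of_mem F (Finset.mem_product.2
      ⟨Fintype.mem_piFinset.2 hwy, Fintype.mem_piFinset.2 hAy⟩), ?_⟩
    intro s
    rw [hVs s, hF]
    apply sup'_lip
    intro a _
    apply inf'_lip
    intro i _
    refine le_trans (min_lip H _ _) ?_
    -- the core estimate
    have hsplit : (r s a + w i ⬝ᵥ φ s a + β * Real.sqrt (φ s a ⬝ᵥ ((Λ i)⁻¹ *ᵥ φ s a)))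
        - (r s a + (fun j => wy i j) ⬝ᵥ φ s a
          + Real.sqrt (φ s a ⬝ᵥ ((Matrix.of fun j k => Ay i (j, k)) *ᵥ φ s a)))
        = ((fun j => w i j - wy i j) ⬝ᵥ φ s a)
          + (β * Real.sqrt (φ s a ⬝ᵥ ((Λ i)⁻¹ *ᵥ φ s a))
            - Real.sqrt (φ s a ⬝ᵥ ((Matrix.of fun j k => Ay i (j, k)) *ᵥ φ s a))) := by
      have expand : (fun j => w i j - wy i j) ⬝ᵥ φ s a
          = w i ⬝ᵥ φ s a - (fun j => wy i j) ⬝ᵥ φ s a := by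
        simp [dotProduct, sub_mul, Finset.sum_sub_distrib]
      rw [expand]
      ring
    rw [hsplit]
    refine le_trans (abs_add_le _ _) ?_
    have hterm1 : |(fun j => w i j - wy i j) ⬝ᵥ φ s a| ≤ ε/2 := by
      refine le_trans (dot_CS _ _) ?_
      have hne : euclNorm (fun j => w i j - wy i j) ≤ ε/2 := by
        rw [← dist_eq_euclNorm (WithLp.toLp 2 (w i)) (wy i)]
        exact hwyd i
      calc euclNorm (fun j => w i j - wy i j) * euclNorm (φ s a)
          ≤ (ε/2) * 1 := mul_le_mul hne (hφ s a) (Real.sqrt_nonneg _) (by linarith)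
      _ = ε/2 := mul_one _
    have hterm2 : |β * Real.sqrt (φ s a ⬝ᵥ ((Λ i)⁻¹ *ᵥ φ s a))
        - Real.sqrt (φ s a ⬝ᵥ ((Matrix.of fun j k => Ay i (j, k)) *ᵥ φ s a))| ≤ ε/2 := by
      -- rewrite β √q as √(φᵀ B φ) with B the scaled inverse
      have hq1 : 0 ≤ φ s a ⬝ᵥ ((Λ i)⁻¹ *ᵥ φ s a) := by
        have := ((hΛ i).1.inv).posSemidef.dotProduct_mulVec_nonneg (φ s a)
        rwa [star_trivial] at this
      have hBv : (Matrix.of fun j k => β^2 * ((Λ i)⁻¹ j k)) *ᵥ φ s a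
          = β^2 • ((Λ i)⁻¹ *ᵥ φ s a) := by
        funext j
        simp [Matrix.mulVec, dotProduct, Finset.mul_sum, mul_assoc]
      have hBq : φ s a ⬝ᵥ ((Matrix.of fun j k => β^2 * ((Λ i)⁻¹ j k)) *ᵥ φ s a)
          = β^2 * (φ s a ⬝ᵥ ((Λ i)⁻¹ *ᵥ φ s a)) := by
        rw [hBv, dotProduct_smul, smul_eq_mul]
      have hβq : β * Real.sqrt (φ s a ⬝ᵥ ((Λ i)⁻¹ *ᵥ φ s a))
          = Real.sqrt (φ s a ⬝ᵥ ((Matrix.of fun j k => β^2 * ((Λ i)⁻¹ j k)) *ᵥ φ s a)) := by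
        rw [hBq, Real.sqrt_mul (sq_nonneg β), Real.sqrt_sq hβ.le]
      rw [hβq]
      refine le_trans (sqrt_lip _ _) ?_
      have hdiff : φ s a ⬝ᵥ ((Matrix.of fun j k => β^2 * ((Λ i)⁻¹ j k)) *ᵥ φ s a)
          - φ s a ⬝ᵥ ((Matrix.of fun j k => Ay i (j, k)) *ᵥ φ s a)
          = φ s a ⬝ᵥ (((Matrix.of fun j k => β^2 * ((Λ i)⁻¹ j k))
            - (Matrix.of fun j k => Ay i (j, k))) *ᵥ φ s a) := by
        rw [Matrix.sub_mulVec, dotProduct_sub]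
      rw [hdiff]
      have hquad := quad_bound ((Matrix.of fun j k => β^2 * ((Λ i)⁻¹ j k))
        - (Matrix.of fun j k => Ay i (j, k))) (φ s a)
      have hfrob : Real.sqrt (frobSq ((Matrix.of fun j k => β^2 * ((Λ i)⁻¹ j k))
          - (Matrix.of fun j k => Ay i (j, k)))) ≤ ε^2/4 := by
        have heq : Real.sqrt (frobSq ((Matrix.of fun j k => β^2 * ((Λ i)⁻¹ j k))
            - (Matrix.of fun j k => Ay i (j, k)))) = dist (Avec i) (Ay i) := by
          rw [EuclideanSpace.dist_eq]
          unfold frobSq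
          congr 1
          refine Finset.sum_congr rfl fun p _ => ?_
          rw [Real.dist_eq, sq_abs]
          simp [hAvec, Matrix.sub_apply]
        rw [heq]
        exact hAyd i
      have hφ2 : (∑ j, φ s a j ^ 2) ≤ 1 := by
        have h := hφ s a
        unfold euclNorm at h
        nlinarith [Real.sq_sqrt (Finset.sum_nonneg fun j (_ : j ∈ Finset.univ) =>
          sq_nonneg (φ s a j)), Real.sqrt_nonneg (∑ j, φ s a j ^ 2)]
      have hmain : |φ s a ⬝ᵥ (((Matrix.of fun j k => β^2 * ((Λ i)⁻¹ j k))
          - (Matrix.of fun j k => Ay i (j, k))) *ᵥ φ s a)| ≤ ε^2/4 := by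
        refine le_trans hquad ?_
        calc Real.sqrt (frobSq _) * (∑ j, φ s a j ^ 2)
            ≤ (ε^2/4) * 1 := mul_le_mul hfrob hφ2
              (Finset.sum_nonneg fun j _ => sq_nonneg _) (by positivity)
        _ = ε^2/4 := mul_one _
      calc Real.sqrt |φ s a ⬝ᵥ (((Matrix.of fun j k => β^2 * ((Λ i)⁻¹ j k))
          - (Matrix.of fun j k => Ay i (j, k))) *ᵥ φ s a)|
          ≤ Real.sqrt (ε^2/4) := Real.sqrt_le_sqrt hmain
      _ = ε/2 := by
          rw [show ε^2/4 = (ε/2)^2 by ring]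
          exact Real.sqrt_sq (by linarith)
    linarith
  · -- cardinality bound
    have hWne : Wnet.Nonempty := by
      obtain ⟨y, hy, -⟩ := hWcov 0 (by rw [norm_zero]; exact hL₁.le)
      exact ⟨y, hy⟩
    have hAne : Anet.Nonempty := by
      obtain ⟨y, hy, -⟩ := hAcov 0 (by rw [norm_zero]; exact hRA)
      exact ⟨y, hy⟩
    set a : ℝ := 1 + 4 * L₁ / ε with haa
    set b : ℝ := 1 + 8 * Real.sqrt d * β ^ 2 / (lam * ε ^ 2) with hbb
    have ha1 : (1:ℝ) ≤ a := by
      rw [haa]; linarith [(by positivity : (0:ℝ) ≤ 4 * L₁ / ε)]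
    have hb1 : (1:ℝ) ≤ b := by
      rw [hbb]; linarith [(by positivity : (0:ℝ) ≤ 8 * Real.sqrt d * β^2 / (lam * ε^2))]
    have hWa : (Wnet.card : ℝ) ≤ a ^ d := by
      have h1 : 1 + 2 * L₁ / (ε/2) = a := by rw [haa]; field_simp; ring
      rw [← h1]
      simpa [Fintype.card_fin] using hWcard
    have hAb : (Anet.card : ℝ) ≤ b ^ (d^2) := by
      have h1 : 1 + 2 * (β^2 * Real.sqrt d / lam) / (ε^2/4) = b := by
        rw [hbb]
        have h2 : 2 * (β^2 * Real.sqrt d / lam) / (ε^2/4) = 8 * Real.sqrt d * β^2 / (lam * ε^2) := by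
          field_simp
          ring
        rw [h2]
      rw [← h1]
      have := hAcard
      simpa [Fintype.card_prod, Fintype.card_fin, sq] using this
    set C := Finset.image F ((Fintype.piFinset fun _ : Fin l => Wnet) ×ˢ
      (Fintype.piFinset fun _ : Fin l => Anet)) with hC
    have hCcard : (C.card : ℝ) ≤ (a^d)^l * (b^(d^2))^l := by
      have h1 : C.card ≤ Wnet.card ^ l * Anet.card ^ l := by
        calc C.card ≤ ((Fintype.piFinset fun _ : Fin l => Wnet) ×ˢ
            (Fintype.piFinset fun _ : Fin l => Anet)).card := Finset.card_image_le
        _ = Wnet.card ^ l * Anet.card ^ l := by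
            rw [Finset.card_product, Fintype.card_piFinset, Fintype.card_piFinset]
            simp [Finset.prod_const]
      calc (C.card : ℝ) ≤ (Wnet.card : ℝ) ^ l * (Anet.card : ℝ) ^ l := by exact_mod_cast h1
      _ ≤ (a^d)^l * (b^(d^2))^l := by
          apply mul_le_mul
          · exact pow_le_pow_left₀ (Nat.cast_nonneg _) hWa l
          · exact pow_le_pow_left₀ (Nat.cast_nonneg _) hAb l
          · exact pow_nonneg (Nat.cast_nonneg _) l
          · exact pow_nonneg (pow_nonneg (by linarith) d) l
    have hCpos : 0 < C.card := by
      apply Finset.card_pos.2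
      apply Finset.image_nonempty.2
      exact Finset.Nonempty.product
        (Fintype.piFinset_nonempty.2 fun _ => hWne) (Fintype.piFinset_nonempty.2 fun _ => hAne)
    have hlog : Real.log C.card ≤ Real.log ((a^d)^l * (b^(d^2))^l) := by
      apply Real.log_le_log (Nat.cast_pos.2 hCpos)
      exact hCcard
    refine le_trans hlog ?_
    rw [← pow_mul, ← pow_mul, Real.log_mul (by positivity) (by positivity),
      Real.log_pow, Real.log_pow]
    push_cast
    apply le_of_eq
    ring
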